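/- With the setup of Theorem on the combinatorial description, V⁺ = ⋃_{R > 0} ⋂_{R' > R} β^{R'}(U⁺): every element of V⁺ lies in β^{R'}(U⁺) for all sufficiently large R' > 0, and conversely. -/

import Mathlib

open Classical

/-- `Z_i = ⋃ {S ∈ 𝒮 : i ∉ S}`. -/
def Zset (n : ℕ) (𝒮 : Set (Set (Fin n))) (i : Fin n) : Set (Fin n) :=
  ⋃₀ {S ∈ 𝒮 | i ∉ S}

/-- `α^ε_i(z) = z_i + ε ∑_{j ∉ Z_i} z_j`. -/
noncomputable def alphaMap (F : Subfield ℝ) (n : ℕ) (𝒮 : Set (Set (Fin n))) (ε : F)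
    (z : Fin n → F) : Fin n → F :=
  fun i => z i + ε * ∑ j ∈ Finset.univ.filter (fun j => j ∉ Zset n 𝒮 i), z j

/-- `P_i = ⋃ {S ∈ 𝒮 : i ∈ E^≥_S}` where `E^≥_S = Sᶜ ∪ E^>_S`. -/
def Pset (n : ℕ) (𝒮 : Set (Set (Fin n))) (Egt : Set (Fin n) → Set (Fin n)) (i : Fin n) :
    Set (Fin n) :=
  ⋃₀ {S ∈ 𝒮 | i ∈ Sᶜ ∪ Egt S}

/-- `β^R_i(y) = y_i - R ∑_{j ∉ P_i, P_j ≠ P_i} y_j`. -/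
noncomputable def betaMap (F : Subfield ℝ) (n : ℕ) (𝒮 : Set (Set (Fin n)))
    (Egt : Set (Fin n) → Set (Fin n)) (R : F) (y : Fin n → F) : Fin n → F :=
  fun i => y i - R * ∑ j ∈ Finset.univ.filter
    (fun j => j ∉ Pset n 𝒮 Egt i ∧ Pset n 𝒮 Egt j ≠ Pset n 𝒮 Egt i), y j

/-- `U⁺ = ⋃_{S ∈ 𝒮} F_{>0}^S · 0^{Sᶜ}`. -/
def Uset (F : Subfield ℝ) (n : ℕ) (𝒮 : Set (Set (Fin n))) : Set (Fin n → F) :=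
  {x | ∃ S ∈ 𝒮, (∀ i ∈ S, 0 < x i) ∧ ∀ i ∉ S, x i = 0}

/-- `V⁺ = ⋃_{S ∈ 𝒮} 0^{E⁰_S} · F_{>0}^{E^>_S} · F^{E^*_S}` (zero off `S`, strictly
positive on `E^>_S`, arbitrary on `E^*_S`). -/
def Vset (F : Subfield ℝ) (n : ℕ) (𝒮 : Set (Set (Fin n)))
    (Egt : Set (Fin n) → Set (Fin n)) : Set (Fin n → F) :=
  {x | ∃ S ∈ 𝒮, (∀ i ∉ S, x i = 0) ∧ ∀ i ∈ Egt S, 0 < x i}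

section Aux

variable {n : ℕ} {𝒮 : Set (Set (Fin n))} {Egt Estar : Set (Fin n) → Set (Fin n)}

lemma subset_Pset {S : Set (Fin n)} {i : Fin n} (hS : S ∈ 𝒮) (hi : i ∈ Sᶜ ∪ Egt S) :
    S ⊆ Pset n 𝒮 Egt i := fun x hx => Set.mem_sUnion.2 ⟨S, ⟨hS, hi⟩, hx⟩

lemma Pset_mono {i j : Fin n} (hj : j ∉ Pset n 𝒮 Egt i) :
    Pset n 𝒮 Egt i ⊆ Pset n 𝒮 Egt j := by
  rintro x hx
  obtain ⟨S, ⟨hS, hi⟩, hxS⟩ := Set.mem_sUnion.1 hx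
  have hjS : j ∉ S := fun h => hj (subset_Pset hS hi h)
  exact Set.mem_sUnion.2 ⟨S, ⟨hS, Or.inl hjS⟩, hxS⟩

lemma Pset_spec (hempty : ∅ ∈ 𝒮)
    (hcup : ∀ S₁ ∈ 𝒮, ∀ S₂ ∈ 𝒮, S₁ ∪ S₂ ∈ 𝒮)
    (hRV1 : ∀ S₁ ∈ 𝒮, ∀ S₂ ∈ 𝒮,
      (S₁ ∪ S₂)ᶜ ∪ Egt (S₁ ∪ S₂) = (S₁ᶜ ∪ Egt S₁) ∩ (S₂ᶜ ∪ Egt S₂))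
    (i : Fin n) :
    Pset n 𝒮 Egt i ∈ 𝒮 ∧ i ∈ (Pset n 𝒮 Egt i)ᶜ ∪ Egt (Pset n 𝒮 Egt i) := by
  set 𝒯 : Set (Set (Fin n)) := {S ∈ 𝒮 | i ∈ Sᶜ ∪ Egt S} with h𝒯
  have hne : 𝒯.Nonempty := ⟨∅, hempty, Or.inl (by simp)⟩
  have hclosed : ∀ S₁ ∈ 𝒯, ∀ S₂ ∈ 𝒯, S₁ ∪ S₂ ∈ 𝒯 := by
    rintro S₁ ⟨hS₁, hi₁⟩ S₂ ⟨hS₂, hi₂⟩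
    refine ⟨hcup S₁ hS₁ S₂ hS₂, ?_⟩
    rw [hRV1 S₁ hS₁ S₂ hS₂]
    exact ⟨hi₁, hi₂⟩
  obtain ⟨T, hT, hmax'⟩ := Set.Finite.exists_maximalFor id 𝒯 (Set.toFinite 𝒯) hne
  have hmax : ∀ a' ∈ 𝒯, T ⊆ a' → T = a' := fun a' ha' h =>
    Set.Subset.antisymm h (hmax' ha' h)
  have hPT : Pset n 𝒮 Egt i = T := by
    apply Set.eq_of_subset_of_subset
    · apply Set.sUnion_subset
      intro S hS
      have h1 : S ∪ T ∈ 𝒯 := hclosed S hS T hT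
      have h2 : T = S ∪ T := hmax (S ∪ T) h1 Set.subset_union_right
      rw [h2]
      exact Set.subset_union_left
    · exact Set.subset_sUnion_of_mem hT
  rw [hPT]; exact ⟨hT.1, hT.2⟩

lemma exists_Egt_not_Pset (hempty : ∅ ∈ 𝒮)
    (hcup : ∀ S₁ ∈ 𝒮, ∀ S₂ ∈ 𝒮, S₁ ∪ S₂ ∈ 𝒮)
    (hpart : ∀ S ∈ 𝒮, Egt S ∩ Estar S = ∅ ∧ Egt S ∪ Estar S = S)
    (hRV1 : ∀ S₁ ∈ 𝒮, ∀ S₂ ∈ 𝒮,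
      (S₁ ∪ S₂)ᶜ ∪ Egt (S₁ ∪ S₂) = (S₁ᶜ ∪ Egt S₁) ∩ (S₂ᶜ ∪ Egt S₂))
    (hRV2 : ∀ S₁ ∈ 𝒮, ∀ S₂ ∈ 𝒮, ¬ S₂ ⊆ S₁ → (Egt S₂ \ S₁).Nonempty)
    {S : Set (Fin n)} (hS : S ∈ 𝒮) {i : Fin n} (hi : i ∈ Estar S) :
    ∃ j, j ∈ Egt S ∧ j ∉ Pset n 𝒮 Egt i := by
  obtain ⟨hT𝒮, hiT⟩ := Pset_spec (Egt := Egt) hempty hcup hRV1 i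
  have hiS : i ∈ S := by
    rw [← (hpart S hS).2]; exact Or.inr hi
  have hnsub : ¬ S ⊆ Pset n 𝒮 Egt i := by
    intro hsub
    have hU : S ∪ Pset n 𝒮 Egt i = Pset n 𝒮 Egt i := Set.union_eq_self_of_subset_left hsub
    have := hRV1 S hS _ hT𝒮
    rw [hU] at this
    have hiE : i ∈ Sᶜ ∪ Egt S := (this ▸ hiT).1
    rcases hiE with h | h
    · exact h hiS
    · have := (hpart S hS).1
      exact absurd (Set.mem_inter h hi) (by rw [this]; exact id)
  obtain ⟨j, hj⟩ := hRV2 _ hT𝒮 S hS hnsub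
  exact ⟨j, hj.1, hj.2⟩

end Aux

/-- Iteration used to invert `betaMap`. -/
noncomputable def iterV (F : Subfield ℝ) (n : ℕ) (x : Fin n → F) (R' : F)
    (D : Fin n → Finset (Fin n)) : ℕ → Fin n → F
  | 0 => x
  | (m+1) => fun i => x i + R' * ∑ j ∈ D i, iterV F n x R' D m j

/-- `V⁺ = ⋃_{R > 0} ⋂_{R' > R} β^{R'}(U⁺)`: every element of `V⁺` lies in `β^{R'}(U⁺)`
for all sufficiently large `R'`, and conversely. -/
theorem stmt13 (F : Subfield ℝ) (n : ℕ) (𝒮 : Set (Set (Fin n)))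
    (hempty : ∅ ∈ 𝒮) (huniv : Set.univ ∈ 𝒮)
    (hcup : ∀ S₁ ∈ 𝒮, ∀ S₂ ∈ 𝒮, S₁ ∪ S₂ ∈ 𝒮)
    (hcap : ∀ S₁ ∈ 𝒮, ∀ S₂ ∈ 𝒮, S₁ ∩ S₂ ∈ 𝒮)
    (Egt Estar : Set (Fin n) → Set (Fin n))
    (hpart : ∀ S ∈ 𝒮, Egt S ∩ Estar S = ∅ ∧ Egt S ∪ Estar S = S)
    (hRV1 : ∀ S₁ ∈ 𝒮, ∀ S₂ ∈ 𝒮,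
      (S₁ ∪ S₂)ᶜ ∪ Egt (S₁ ∪ S₂) = (S₁ᶜ ∪ Egt S₁) ∩ (S₂ᶜ ∪ Egt S₂))
    (hRV2 : ∀ S₁ ∈ 𝒮, ∀ S₂ ∈ 𝒮, ¬ S₂ ⊆ S₁ → (Egt S₂ \ S₁).Nonempty) :
    Vset F n 𝒮 Egt =
      ⋃ (R : F) (_ : 0 < R), ⋂ (R' : F) (_ : R < R'),
        betaMap F n 𝒮 Egt R' '' Uset F n 𝒮 := by
  have hcard : ∀ i, (Pset n 𝒮 Egt i).ncard ≤ n := by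
    intro i
    calc (Pset n 𝒮 Egt i).ncard ≤ (Set.univ : Set (Fin n)).ncard :=
          Set.ncard_le_ncard (Set.subset_univ _) Set.finite_univ
      _ = n := by simp [Set.ncard_univ]
  -- height function
  set h : Fin n → ℕ := fun i => n - (Pset n 𝒮 Egt i).ncard with hh
  have hlt : ∀ i j : Fin n, j ∉ Pset n 𝒮 Egt i → Pset n 𝒮 Egt j ≠ Pset n 𝒮 Egt i →
      h j < h i := by
    intro i j hj hne
    have hss : Pset n 𝒮 Egt i ⊂ Pset n 𝒮 Egt j :=
      (Pset_mono hj).ssubset_of_ne (Ne.symm hne)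
    have := Set.ncard_lt_ncard hss (Set.toFinite _)
    have h1 := hcard i; have h2 := hcard j
    simp only [hh]
    omega
  have hPuniv : ∀ i : Fin n, h i = 0 → Pset n 𝒮 Egt i = Set.univ := by
    intro i hi
    have h1 := hcard i
    have h2 : n ≤ (Pset n 𝒮 Egt i).ncard := by simp only [hh] at hi; omega
    refine Set.eq_of_subset_of_ncard_le (Set.subset_univ _) ?_ Set.finite_univ
    simpa [Set.ncard_univ] using h2
  ext x
  simp only [Set.mem_iUnion, Set.mem_iInter]
  constructor
  · -- forward direction
    rintro ⟨S, hS, hzero, hpos⟩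
    set G : Finset (Fin n) := Finset.univ.filter (fun j => j ∈ Egt S) with hG
    set m : F := if hne : G.Nonempty then G.inf' hne x else 1 with hm
    have hmpos : 0 < m := by
      rw [hm]
      split
      · rename_i hne
        rw [Finset.lt_inf'_iff]
        intro j hj
        exact hpos j (by simpa [hG] using hj)
      · exact one_pos
    have hmle : ∀ j ∈ Egt S, m ≤ x j := by
      intro j hj
      have hjG : j ∈ G := by simp [hG, hj]
      rw [hm, dif_pos ⟨j, hjG⟩]
      exact Finset.inf'_le x hjG
    set M : F := ∑ i, |x i| with hM
    have hMle : ∀ i, |x i| ≤ M := by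
      intro i
      exact Finset.single_le_sum (f := fun i => |x i|) (fun j _ => abs_nonneg _)
        (Finset.mem_univ i)
    have hMnn : 0 ≤ M := Finset.sum_nonneg (fun i _ => abs_nonneg _)
    refine ⟨M / m + 1, by have h1 : 0 ≤ M / m := div_nonneg hMnn hmpos.le; linarith, ?_⟩
    intro R' hR'
    set D : Fin n → Finset (Fin n) := fun i => Finset.univ.filter
      (fun j => (j ∉ Pset n 𝒮 Egt i ∧ Pset n 𝒮 Egt j ≠ Pset n 𝒮 Egt i) ∧ j ∈ S) with hD
    set y : Fin n → F := iterV F n x R' D n with hy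
    have hiter : ∀ k (i : Fin n), h i ≤ k →
        iterV F n x R' D (k+1) i = iterV F n x R' D k i := by
      intro k
      induction k with
      | zero =>
        intro i hi
        have hPu := hPuniv i (Nat.le_zero.1 hi)
        have hDi : D i = ∅ := by
          rw [hD]
          apply Finset.filter_false_of_mem
          intro j _
          simp [hPu]
        simp [iterV, hDi]
      | succ k IH =>
        intro i hi
        have hstep : ∀ j ∈ D i, iterV F n x R' D (k+1) j = iterV F n x R' D k j := by
          intro j hj
          rw [hD, Finset.mem_filter] at hj
          exact IH j (by have := hlt i j hj.2.1.1 hj.2.1.2; omega)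
        show x i + R' * ∑ j ∈ D i, iterV F n x R' D (k+1) j
            = x i + R' * ∑ j ∈ D i, iterV F n x R' D k j
        rw [Finset.sum_congr rfl hstep]
    have hfix : ∀ i, y i = x i + R' * ∑ j ∈ D i, y j := by
      intro i
      calc y i = iterV F n x R' D (n+1) i := (hiter n i (Nat.sub_le _ _)).symm
        _ = x i + R' * ∑ j ∈ D i, y j := rfl
    have hDempty : ∀ i : Fin n, i ∈ Sᶜ ∪ Egt S → D i = ∅ := by
      intro i hi
      have hSP : S ⊆ Pset n 𝒮 Egt i := subset_Pset hS hi
      rw [hD]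
      apply Finset.filter_false_of_mem
      intro j _
      rintro ⟨⟨hjP, -⟩, hjS⟩
      exact hjP (hSP hjS)
    have hyzero : ∀ i, i ∉ S → y i = 0 := by
      intro i hi
      rw [hfix i, hDempty i (Or.inl hi), hzero i hi]
      simp
    have hyE : ∀ i ∈ Egt S, y i = x i := by
      intro i hi
      rw [hfix i, hDempty i (Or.inr hi)]
      simp
    have hRm : M < R' * m := by
      have h1 : (M / m + 1) * m = M + m := by field_simp
      have h2 : (M / m + 1) * m < R' * m := mul_lt_mul_of_pos_right hR' hmpos
      linarith
    have hR'pos : 0 < R' := by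
      have h1 : 0 ≤ M / m := div_nonneg hMnn hmpos.le
      linarith
    have hposy : ∀ k, ∀ i ∈ S, h i ≤ k → 0 < y i := by
      intro k
      induction k with
      | zero =>
        intro i hiS hi
        rcases (by rw [← (hpart S hS).2] at hiS; exact hiS : i ∈ Egt S ∪ Estar S) with hE | hE
        · rw [hyE i hE]; exact hpos i hE
        · obtain ⟨j, hjE, hjP⟩ := exists_Egt_not_Pset hempty hcup hpart hRV1 hRV2 hS hE
          exact absurd (show j ∈ Pset n 𝒮 Egt i by
            rw [hPuniv i (Nat.le_zero.1 hi)]; trivial) hjP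
      | succ k IH =>
        intro i hiS hi
        rcases (by rw [← (hpart S hS).2] at hiS; exact hiS : i ∈ Egt S ∪ Estar S) with hE | hE
        · rw [hyE i hE]; exact hpos i hE
        · obtain ⟨j₀, hj₀E, hj₀P⟩ := exists_Egt_not_Pset hempty hcup hpart hRV1 hRV2 hS hE
          have hj₀S : j₀ ∈ S := by rw [← (hpart S hS).2]; exact Or.inl hj₀E
          have hj₀ne : Pset n 𝒮 Egt j₀ ≠ Pset n 𝒮 Egt i := by
            intro hEq
            exact hj₀P (hEq ▸ subset_Pset hS (Or.inr hj₀E) hj₀S)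
          have hj₀D : j₀ ∈ D i := by
            rw [hD]
            simp only [Finset.mem_filter, Finset.mem_univ, true_and]
            exact ⟨⟨hj₀P, hj₀ne⟩, hj₀S⟩
          have hDy : ∀ j ∈ D i, 0 < y j := by
            intro j hj
            rw [hD, Finset.mem_filter] at hj
            exact IH j hj.2.2 (by have := hlt i j hj.2.1.1 hj.2.1.2; omega)
          have hsum : m ≤ ∑ j ∈ D i, y j := by
            calc m ≤ x j₀ := hmle j₀ hj₀E
              _ = y j₀ := (hyE j₀ hj₀E).symm
              _ ≤ ∑ j ∈ D i, y j :=
                  Finset.single_le_sum (fun j hj => (hDy j hj).le) hj₀D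
          have hxiM : -M ≤ x i := by
            have h1 := hMle i
            have h2 := neg_abs_le (x i)
            linarith
          have hmul : R' * m ≤ R' * ∑ j ∈ D i, y j :=
            mul_le_mul_of_nonneg_left hsum hR'pos.le
          rw [hfix i]
          linarith
    refine ⟨y, ⟨S, hS, fun i hi => hposy n i hi (Nat.sub_le _ _), hyzero⟩, ?_⟩
    funext i
    show y i - R' * ∑ j ∈ Finset.univ.filter
        (fun j => j ∉ Pset n 𝒮 Egt i ∧ Pset n 𝒮 Egt j ≠ Pset n 𝒮 Egt i), y j = x i
    have hsub : D i ⊆ Finset.univ.filter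
        (fun j => j ∉ Pset n 𝒮 Egt i ∧ Pset n 𝒮 Egt j ≠ Pset n 𝒮 Egt i) := by
      intro j hj
      rw [hD, Finset.mem_filter] at hj
      simp only [Finset.mem_filter, Finset.mem_univ, true_and]
      exact hj.2.1
    have hEq : ∑ j ∈ Finset.univ.filter
        (fun j => j ∉ Pset n 𝒮 Egt i ∧ Pset n 𝒮 Egt j ≠ Pset n 𝒮 Egt i), y j
        = ∑ j ∈ D i, y j := by
      refine (Finset.sum_subset hsub ?_).symm
      intro j hjmem hjD
      rw [hD] at hjD
      simp only [Finset.mem_filter, Finset.mem_univ, true_and] at hjmem hjD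
      exact hyzero j (fun hjS => hjD ⟨hjmem, hjS⟩)
    rw [hEq, hfix i]
    ring
  · -- backward direction
    rintro ⟨R, hR, hmem⟩
    have hx := hmem (R + 1) (lt_add_one R)
    obtain ⟨y, ⟨T, hT, hypos, hyzero⟩, hxy⟩ := hx
    have key : ∀ i : Fin n, i ∈ Tᶜ ∪ Egt T → x i = y i := by
      intro i hi
      have hTP : T ⊆ Pset n 𝒮 Egt i := subset_Pset hT hi
      have : ∀ j ∈ Finset.univ.filter
          (fun j => j ∉ Pset n 𝒮 Egt i ∧ Pset n 𝒮 Egt j ≠ Pset n 𝒮 Egt i), y j = 0 := by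
        intro j hj
        rw [Finset.mem_filter] at hj
        exact hyzero j (fun hjT => hj.2.1 (hTP hjT))
      have hsum : ∑ j ∈ Finset.univ.filter
          (fun j => j ∉ Pset n 𝒮 Egt i ∧ Pset n 𝒮 Egt j ≠ Pset n 𝒮 Egt i), y j = 0 :=
        Finset.sum_eq_zero this
      rw [← hxy]
      simp [betaMap, hsum]
    refine ⟨T, hT, ?_, ?_⟩
    · intro i hi
      rw [key i (Or.inl hi)]
      exact hyzero i hi
    · intro i hi
      rw [key i (Or.inr hi)]
      exact hypos i (by rw [← (hpart T hT).2]; exact Or.inl hi)
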